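/- Let N ≥ 2, κ > 0, α ∈ ℝ with α + Nκ ≠ 0. For j,ℓ ∈ {1,…,N} and x,y ≥ 0 define G_{jℓ}(x,y) := δ_{jℓ}·κ^{-1}·sinh(κ·min(x,y))·exp(−κ·max(x,y)) + (α+Nκ)^{-1}·exp(−κ(x+y)). Let f_1,…,f_N : (0,∞) → ℝ be continuous with compact support, and set w_j(x) := Σ_{ℓ=1}^N ∫₀^∞ G_{jℓ}(x,y) f_ℓ(y) dy for x ≥ 0. Then: (i) each w_j is continuously differentiable on [0,∞) and twice differentiable on (0,∞) with w_j''(x) = κ²·w_j(x) − f_j(x) for every x > 0; (ii) w_1(0) = w_2(0) = ⋯ = w_N(0); (iii) Σ_{j=1}^N w_j'(0) = α·w_1(0); (iv) each w_j belongs to L²((0,∞)). (This is the free-potential case of the paper's Lemma on the resolvent kernel of the δ-coupled Schrödinger operator H_α(0) on the star graph, at energy k² = −κ².) -/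

import Mathlib

open MeasureTheory Set Real

/-- Resolvent kernel of the free δ-coupled Schrödinger operator `H_α(0)` on the
star graph of `N` half-lines at energy `−κ²`. -/
noncomputable def freeStarKernel (N : ℕ) (κ α : ℝ) (j ℓ : Fin N) (x y : ℝ) : ℝ :=
  (if j = ℓ then 1 else 0) *
      (κ⁻¹ * Real.sinh (κ * min x y) * Real.exp (-(κ * max x y)))
    + (α + N * κ)⁻¹ * Real.exp (-(κ * (x + y)))

noncomputable def starS (κ : ℝ) (f : ℝ → ℝ) (x : ℝ) : ℝ :=
  ∫ y in (0:ℝ)..x, Real.sinh (κ*y) * f y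

noncomputable def starE (κ : ℝ) (f : ℝ → ℝ) (x : ℝ) : ℝ :=
  ∫ y in (0:ℝ)..x, Real.exp (-(κ*y)) * f y

noncomputable def starA (κ : ℝ) (f : ℝ → ℝ) : ℝ :=
  ∫ y in Ioi (0:ℝ), Real.exp (-(κ*y)) * f y

noncomputable def starW (κ c A : ℝ) (f : ℝ → ℝ) (x : ℝ) : ℝ :=
  κ⁻¹ * (Real.exp (-(κ*x)) * starS κ f x
    + Real.sinh (κ*x) * (starA κ f - starE κ f x)) + c * A * Real.exp (-(κ*x))

noncomputable def starW' (κ c A : ℝ) (f : ℝ → ℝ) (x : ℝ) : ℝ :=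
  -(Real.exp (-(κ*x)) * starS κ f x)
    + Real.cosh (κ*x) * (starA κ f - starE κ f x) - κ * (c * A * Real.exp (-(κ*x)))

lemma starS_hasDerivAt {κ : ℝ} {f : ℝ → ℝ} (hf : Continuous f) (x : ℝ) :
    HasDerivAt (starS κ f) (Real.sinh (κ*x) * f x) x := by
  have hc : Continuous fun y => Real.sinh (κ*y) * f y :=
    (Real.continuous_sinh.comp (continuous_const.mul continuous_id)).mul hf
  exact intervalIntegral.integral_hasDerivAt_right (hc.intervalIntegrable _ _)
    hc.aestronglyMeasurable.stronglyMeasurableAtFilter hc.continuousAt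

lemma starE_hasDerivAt {κ : ℝ} {f : ℝ → ℝ} (hf : Continuous f) (x : ℝ) :
    HasDerivAt (starE κ f) (Real.exp (-(κ*x)) * f x) x := by
  have hc : Continuous fun y => Real.exp (-(κ*y)) * f y :=
    (((continuous_const.mul continuous_id).neg).rexp).mul hf
  exact intervalIntegral.integral_hasDerivAt_right (hc.intervalIntegrable _ _)
    hc.aestronglyMeasurable.stronglyMeasurableAtFilter hc.continuousAt

lemma expNeg_hasDerivAt (κ x : ℝ) :
    HasDerivAt (fun t => Real.exp (-(κ*t))) (-κ * Real.exp (-(κ*x))) x := by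
  have h : HasDerivAt (fun t : ℝ => -(κ*t)) (-κ) x := by
    have h0 : HasDerivAt (fun t : ℝ => -(κ*t)) (-(κ*1)) x := ((hasDerivAt_id x).const_mul κ).neg
    simpa using h0
  simpa [mul_comm] using h.exp

lemma sinhκ_hasDerivAt (κ x : ℝ) :
    HasDerivAt (fun t => Real.sinh (κ*t)) (κ * Real.cosh (κ*x)) x := by
  have h : HasDerivAt (fun t : ℝ => κ*t) κ x := by
    simpa using (hasDerivAt_id x).const_mul κ
  simpa [mul_comm] using h.sinh

lemma coshκ_hasDerivAt (κ x : ℝ) :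
    HasDerivAt (fun t => Real.cosh (κ*t)) (κ * Real.sinh (κ*x)) x := by
  have h : HasDerivAt (fun t : ℝ => κ*t) κ x := by
    simpa using (hasDerivAt_id x).const_mul κ
  simpa [mul_comm] using h.cosh

lemma starW_hasDerivAt {κ : ℝ} (hκ : κ ≠ 0) (c A : ℝ) {f : ℝ → ℝ} (hf : Continuous f) (x : ℝ) :
    HasDerivAt (starW κ c A f) (starW' κ c A f x) x := by
  have h1 := ((expNeg_hasDerivAt κ x).mul (starS_hasDerivAt (κ := κ) hf x))
  have h2 := ((sinhκ_hasDerivAt κ x).mul (((starE_hasDerivAt (κ := κ) hf x).const_sub (starA κ f))))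
  have h3 := (expNeg_hasDerivAt κ x).const_mul (c*A)
  have h := ((h1.add h2).const_mul κ⁻¹).add h3
  have heq : starW κ c A f = fun t => κ⁻¹ * (Real.exp (-(κ*t)) * starS κ f t
      + Real.sinh (κ*t) * (starA κ f - starE κ f t)) + c * A * Real.exp (-(κ*t)) := rfl
  rw [heq]
  refine h.congr_deriv (Eq.symm ?_)
  simp only [starW']
  field_simp
  ring

lemma starW'_hasDerivAt {κ : ℝ} (hκ : κ ≠ 0) (c A : ℝ) {f : ℝ → ℝ} (hf : Continuous f) (x : ℝ) :
    HasDerivAt (starW' κ c A f) (κ^2 * starW κ c A f x - f x) x := by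
  have h1 := ((expNeg_hasDerivAt κ x).mul (starS_hasDerivAt (κ := κ) hf x)).neg
  have h2 := ((coshκ_hasDerivAt κ x).mul (((starE_hasDerivAt (κ := κ) hf x).const_sub (starA κ f))))
  have h3 := ((expNeg_hasDerivAt κ x).const_mul (c*A)).const_mul κ
  have h := (h1.add h2).sub h3
  have heq : starW' κ c A f = fun t => -(Real.exp (-(κ*t)) * starS κ f t)
      + Real.cosh (κ*t) * (starA κ f - starE κ f t) - κ * (c * A * Real.exp (-(κ*t))) := rfl
  rw [heq]
  refine h.congr_deriv (Eq.symm ?_)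
  have key : Real.exp (-(κ*x)) * Real.sinh (κ*x) + Real.exp (-(κ*x)) * Real.cosh (κ*x) = 1 := by
    rw [← mul_add, Real.sinh_add_cosh, ← Real.exp_add]
    simp
  simp only [starW]
  have h4 : κ^2 * κ⁻¹ = κ := by field_simp [pow_two]
  linear_combination (Real.exp (-(κ*x)) * starS κ f x
    + Real.sinh (κ*x) * (starA κ f - starE κ f x)) * h4 + f x * key

lemma star_integrableOn {f : ℝ → ℝ} (hf : Continuous f) (hsupp : HasCompactSupport f)
    {g : ℝ → ℝ} (hg : Continuous g) (s : Set ℝ) :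
    IntegrableOn (fun y => g y * f y) s := by
  exact ((hg.mul hf).integrable_of_hasCompactSupport (hsupp.mul_left)).integrableOn

lemma star_split {x : ℝ} (hx : 0 ≤ x) {h : ℝ → ℝ} (hi : IntegrableOn h (Ioc 0 x))
    (hi2 : IntegrableOn h (Ioi x)) :
    ∫ y in Ioi (0:ℝ), h y = (∫ y in Ioc 0 x, h y) + ∫ y in Ioi x, h y := by
  rw [← Ioc_union_Ioi_eq_Ioi hx]
  exact setIntegral_union (Ioc_disjoint_Ioi le_rfl) measurableSet_Ioi hi hi2

lemma starA_sub_starE {κ : ℝ} {f : ℝ → ℝ} (hf : Continuous f) (hsupp : HasCompactSupport f)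
    {x : ℝ} (hx : 0 ≤ x) :
    starA κ f - starE κ f x = ∫ y in Ioi x, Real.exp (-(κ*y)) * f y := by
  have hg : Continuous fun y : ℝ => Real.exp (-(κ*y)) :=
    Real.continuous_exp.comp (continuous_const.mul continuous_id).neg
  have hsplit := star_split hx (star_integrableOn hf hsupp hg (Ioc 0 x))
    (star_integrableOn hf hsupp hg (Ioi x))
  have hE : starE κ f x = ∫ y in Ioc 0 x, Real.exp (-(κ*y)) * f y :=
    intervalIntegral.integral_of_le hx
  rw [starA, hsplit, hE]; ring

lemma star_kernel_integral {κ : ℝ} {f : ℝ → ℝ} (hf : Continuous f)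
    (hsupp : HasCompactSupport f) {x : ℝ} (hx : 0 ≤ x) :
    ∫ y in Ioi (0:ℝ), (κ⁻¹ * Real.sinh (κ * min x y) * Real.exp (-(κ * max x y))) * f y
      = κ⁻¹ * (Real.exp (-(κ*x)) * starS κ f x
        + Real.sinh (κ*x) * (starA κ f - starE κ f x)) := by
  have hg : Continuous fun y : ℝ => κ⁻¹ * Real.sinh (κ * min x y) * Real.exp (-(κ * max x y)) := by
    have hmin : Continuous fun y : ℝ => min x y := continuous_const.min continuous_id
    have hmax : Continuous fun y : ℝ => max x y := continuous_const.max continuous_id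
    exact ((continuous_const.mul (Real.continuous_sinh.comp (continuous_const.mul hmin)))).mul
      (Real.continuous_exp.comp ((continuous_const.mul hmax)).neg)
  have hsplit := star_split hx (star_integrableOn hf hsupp hg (Ioc 0 x))
    (star_integrableOn hf hsupp hg (Ioi x))
  rw [hsplit]
  have h1 : ∫ y in Ioc 0 x, (κ⁻¹ * Real.sinh (κ * min x y) * Real.exp (-(κ * max x y))) * f y
      = κ⁻¹ * Real.exp (-(κ*x)) * starS κ f x := by
    rw [show starS κ f x = ∫ y in Ioc 0 x, Real.sinh (κ*y) * f y from
      intervalIntegral.integral_of_le hx, ← MeasureTheory.integral_const_mul]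
    refine setIntegral_congr_fun measurableSet_Ioc fun y hy => ?_
    rw [min_eq_right hy.2, max_eq_left hy.2]
    ring
  have h2 : ∫ y in Ioi x, (κ⁻¹ * Real.sinh (κ * min x y) * Real.exp (-(κ * max x y))) * f y
      = κ⁻¹ * Real.sinh (κ*x) * (starA κ f - starE κ f x) := by
    rw [starA_sub_starE hf hsupp hx, ← MeasureTheory.integral_const_mul]
    refine setIntegral_congr_fun measurableSet_Ioi fun y hy => ?_
    rw [min_eq_left (le_of_lt hy), max_eq_right (le_of_lt hy)]
    ring
  rw [h1, h2]; ring

lemma star_w_eq (N : ℕ) (κ α : ℝ) (j : Fin N) (f : Fin N → ℝ → ℝ)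
    (hfc : ∀ ℓ, Continuous (f ℓ)) (hfs : ∀ ℓ, HasCompactSupport (f ℓ))
    {x : ℝ} (hx : 0 ≤ x) :
    ∑ ℓ, ∫ y in Ioi (0:ℝ), freeStarKernel N κ α j ℓ x y * f ℓ y
      = starW κ (α + N*κ)⁻¹ (∑ ℓ, starA κ (f ℓ)) (f j) x := by
  have hmin : Continuous fun y : ℝ => min x y := continuous_const.min continuous_id
  have hmax : Continuous fun y : ℝ => max x y := continuous_const.max continuous_id
  have hg : Continuous fun y : ℝ => κ⁻¹ * Real.sinh (κ * min x y) * Real.exp (-(κ * max x y)) :=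
    ((continuous_const.mul (Real.continuous_sinh.comp (continuous_const.mul hmin)))).mul
      (Real.continuous_exp.comp ((continuous_const.mul hmax)).neg)
  have he : Continuous fun y : ℝ => (α + N*κ)⁻¹ * Real.exp (-(κ * (x + y))) :=
    continuous_const.mul
      (Real.continuous_exp.comp ((continuous_const.mul (continuous_const.add continuous_id)).neg))
  have hterm : ∀ ℓ : Fin N, ∫ y in Ioi (0:ℝ), freeStarKernel N κ α j ℓ x y * f ℓ y
      = (if j = ℓ then 1 else 0) *
          (κ⁻¹ * (Real.exp (-(κ*x)) * starS κ (f ℓ) x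
            + Real.sinh (κ*x) * (starA κ (f ℓ) - starE κ (f ℓ) x)))
        + (α + N*κ)⁻¹ * Real.exp (-(κ*x)) * starA κ (f ℓ) := by
    intro ℓ
    have heq : ∀ y : ℝ, freeStarKernel N κ α j ℓ x y * f ℓ y
        = (if j = ℓ then 1 else 0) *
            ((κ⁻¹ * Real.sinh (κ * min x y) * Real.exp (-(κ * max x y))) * f ℓ y)
          + ((α + N*κ)⁻¹ * Real.exp (-(κ * (x + y)))) * f ℓ y := by
      intro y; simp only [freeStarKernel]; ring
    simp only [heq]
    rw [MeasureTheory.integral_add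
      ((star_integrableOn (hfc ℓ) (hfs ℓ) hg (Ioi 0)).const_mul _)
      (star_integrableOn (hfc ℓ) (hfs ℓ) he (Ioi 0))]
    congr 1
    · rw [MeasureTheory.integral_const_mul]
      congr 1
      exact star_kernel_integral (hfc ℓ) (hfs ℓ) hx
    · rw [show (fun y => ((α + N*κ)⁻¹ * Real.exp (-(κ * (x + y)))) * f ℓ y)
          = fun y => ((α + N*κ)⁻¹ * Real.exp (-(κ*x))) * (Real.exp (-(κ*y)) * f ℓ y) by
        funext y
        rw [show -(κ * (x + y)) = -(κ*x) + -(κ*y) by ring, Real.exp_add]; ring,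
        MeasureTheory.integral_const_mul]
      rw [starA]
  rw [Finset.sum_congr rfl fun ℓ _ => hterm ℓ, Finset.sum_add_distrib]
  simp only [ite_mul, one_mul, zero_mul]
  rw [Finset.sum_ite_eq]
  simp only [Finset.mem_univ, if_true]
  rw [← Finset.mul_sum, starW]
  ring

lemma starS_continuous {κ : ℝ} {f : ℝ → ℝ} (hf : Continuous f) : Continuous (starS κ f) :=
  continuous_iff_continuousAt.2 fun x => (starS_hasDerivAt (κ := κ) hf x).continuousAt

lemma starE_continuous {κ : ℝ} {f : ℝ → ℝ} (hf : Continuous f) : Continuous (starE κ f) :=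
  continuous_iff_continuousAt.2 fun x => (starE_hasDerivAt (κ := κ) hf x).continuousAt

lemma starW_continuous {κ : ℝ} (c A : ℝ) {f : ℝ → ℝ} (hf : Continuous f) :
    Continuous (starW κ c A f) := by
  have he : Continuous fun x : ℝ => Real.exp (-(κ*x)) :=
    Real.continuous_exp.comp (continuous_const.mul continuous_id).neg
  have hs : Continuous fun x : ℝ => Real.sinh (κ*x) :=
    Real.continuous_sinh.comp (continuous_const.mul continuous_id)
  exact (continuous_const.mul ((he.mul (starS_continuous hf)).add
    (hs.mul (continuous_const.sub (starE_continuous hf))))).add (continuous_const.mul he)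

lemma starW'_continuous {κ : ℝ} (c A : ℝ) {f : ℝ → ℝ} (hf : Continuous f) :
    Continuous (starW' κ c A f) := by
  have he : Continuous fun x : ℝ => Real.exp (-(κ*x)) :=
    Real.continuous_exp.comp (continuous_const.mul continuous_id).neg
  have hc : Continuous fun x : ℝ => Real.cosh (κ*x) :=
    Real.continuous_cosh.comp (continuous_const.mul continuous_id)
  exact (((he.mul (starS_continuous hf)).neg.add
    (hc.mul (continuous_const.sub (starE_continuous hf)))).sub
    (continuous_const.mul (continuous_const.mul he)))

lemma starW_memLp {κ : ℝ} (hκ : 0 < κ) (c A : ℝ) {f : ℝ → ℝ} (hf : Continuous f)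
    (hsupp : HasCompactSupport f) :
    MemLp (starW κ c A f) 2 (volume.restrict (Ioi 0)) := by
  -- choose T beyond the support
  obtain ⟨B, hB⟩ := hsupp.isCompact.bddAbove
  set T : ℝ := max B 0 + 1 with hT
  have hT0 : 0 ≤ T := by positivity
  have hfzero : ∀ y, T ≤ y → f y = 0 := by
    intro y hy
    apply image_eq_zero_of_notMem_tsupport
    intro hmem
    have := hB hmem
    have : y ≤ max B 0 := le_trans this (le_max_left _ _)
    linarith
  -- on [T, ∞) the function is a multiple of exp
  have htail : ∀ x, T ≤ x → starW κ c A f x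
      = (κ⁻¹ * starS κ f T + c * A) * Real.exp (-(κ*x)) := by
    intro x hx
    have hS : starS κ f x = starS κ f T := by
      have hcont : Continuous fun y => Real.sinh (κ*y) * f y :=
        (Real.continuous_sinh.comp (continuous_const.mul continuous_id)).mul hf
      have hadj : starS κ f T + ∫ y in T..x, Real.sinh (κ*y) * f y = starS κ f x :=
        intervalIntegral.integral_add_adjacent_intervals
          (hcont.intervalIntegrable _ _) (hcont.intervalIntegrable _ _)
      have hz : (∫ y in T..x, Real.sinh (κ*y) * f y) = 0 := by
        rw [intervalIntegral.integral_congr (g := fun _ => (0:ℝ)) ?_,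
          intervalIntegral.integral_zero]
        intro y hy
        rw [uIcc_of_le hx] at hy
        simp [hfzero y hy.1]
      rw [← hadj, hz, add_zero]
    have hAE : starA κ f - starE κ f x = 0 := by
      rw [starA_sub_starE hf hsupp (le_trans hT0 hx)]
      rw [setIntegral_congr_fun measurableSet_Ioi
        (fun y hy => by simp [hfzero y (le_trans hx (le_of_lt hy))] : EqOn _ (fun _ => (0:ℝ)) _)]
      exact integral_zero _ _
    rw [starW, hS, hAE]
    ring
  -- global exponential bound on (0, ∞)
  obtain ⟨C, hC⟩ := (isCompact_Icc (a := (0:ℝ)) (b := T)).exists_bound_of_continuousOn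
    (starW_continuous c A hf).continuousOn
  set D : ℝ := |C| * Real.exp (κ*T) + |κ⁻¹ * starS κ f T + c * A| with hD
  have hbound : ∀ x ∈ Ioi (0:ℝ), ‖starW κ c A f x‖ ≤ D * Real.exp (-(κ*x)) := by
    intro x hx
    rcases le_or_gt x T with hxT | hxT
    · have h1 : ‖starW κ c A f x‖ ≤ C := hC x ⟨le_of_lt hx, hxT⟩
      have h2 : (1:ℝ) ≤ Real.exp (κ*T) * Real.exp (-(κ*x)) := by
        rw [← Real.exp_add]
        have : 0 ≤ κ*T + -(κ*x) := by nlinarith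
        simpa using Real.one_le_exp this
      have h3 : |C| ≤ |C| * (Real.exp (κ*T) * Real.exp (-(κ*x))) := by
        nlinarith [abs_nonneg C]
      have h4 : C ≤ |C| := le_abs_self C
      have h5 : 0 ≤ |κ⁻¹ * starS κ f T + c * A| * Real.exp (-(κ*x)) := by positivity
      calc ‖starW κ c A f x‖ ≤ C := h1
        _ ≤ |C| * (Real.exp (κ*T) * Real.exp (-(κ*x))) := le_trans h4 h3
        _ ≤ D * Real.exp (-(κ*x)) := by rw [hD]; nlinarith
    · rw [htail x (le_of_lt hxT)]
      rw [norm_mul, Real.norm_eq_abs, Real.norm_eq_abs, Real.abs_exp]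
      have : 0 ≤ Real.exp (-(κ*x)) := le_of_lt (Real.exp_pos _)
      have hD1 : |κ⁻¹ * starS κ f T + c * A| ≤ D := by
        rw [hD]; exact le_add_of_nonneg_left (by positivity)
      nlinarith [abs_nonneg (κ⁻¹ * starS κ f T + c * A)]
  -- the dominating function is in L²
  have hg : MemLp (fun x => D * Real.exp (-(κ*x))) 2 (volume.restrict (Ioi 0)) := by
    have hgc : Continuous fun x : ℝ => D * Real.exp (-(κ*x)) :=
      continuous_const.mul (Real.continuous_exp.comp (continuous_const.mul continuous_id).neg)
    rw [memLp_two_iff_integrable_sq hgc.aestronglyMeasurable]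
    have hint : IntegrableOn (fun x => D^2 * Real.exp (-(2*κ)*x)) (Ioi 0) :=
      (exp_neg_integrableOn_Ioi 0 (by positivity)).const_mul _
    have heq : (fun x => (D * Real.exp (-(κ*x)))^2) = fun x => D^2 * Real.exp (-(2*κ)*x) := by
      funext x
      rw [mul_pow, sq (Real.exp _), ← Real.exp_add, show -(κ*x) + -(κ*x) = -(2*κ)*x by ring]
    rw [heq]
    exact hint
  refine MemLp.of_le hg (starW_continuous c A hf).aestronglyMeasurable ?_
  rw [ae_restrict_iff' measurableSet_Ioi]
  refine ae_of_all _ fun x hx => ?_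
  calc ‖starW κ c A f x‖ ≤ D * Real.exp (-(κ*x)) := hbound x hx
    _ ≤ ‖D * Real.exp (-(κ*x))‖ := le_abs_self _

/-- The free-potential case of the resolvent-kernel lemma: for continuous,
compactly supported data `f`, the functions `w_j = Σ_ℓ ∫ G_{jℓ}(·,y) f_ℓ(y) dy`
are `C¹` on `[0,∞)`, satisfy `w'' = κ²w − f` on `(0,∞)`, obey the δ vertex
conditions with parameter `α`, and lie in `L²((0,∞))`. -/
theorem freeStarKernel_resolvent
    (N : ℕ) (hN : 2 ≤ N) (κ α : ℝ) (hκ : 0 < κ) (hα : α + N * κ ≠ 0)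
    (f : Fin N → ℝ → ℝ)
    (hfc : ∀ j, Continuous (f j)) (hfs : ∀ j, HasCompactSupport (f j))
    (hfsupp : ∀ j, tsupport (f j) ⊆ Ioi 0)
    (w : Fin N → ℝ → ℝ)
    (hw : ∀ j x, w j x = ∑ ℓ, ∫ y in Ioi (0:ℝ), freeStarKernel N κ α j ℓ x y * f ℓ y) :
    ∃ w' : Fin N → ℝ → ℝ,
      (∀ j, ∀ x ∈ Ici (0:ℝ), HasDerivWithinAt (w j) (w' j x) (Ici 0) x) ∧
      (∀ j, ContinuousOn (w' j) (Ici 0)) ∧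
      (∀ j, ∀ x ∈ Ioi (0:ℝ), HasDerivAt (w' j) (κ ^ 2 * w j x - f j x) x) ∧
      (∀ j, w j 0 = w ⟨0, by omega⟩ 0) ∧
      ((∑ j, w' j 0) = α * w ⟨0, by omega⟩ 0) ∧
      (∀ j, MemLp (w j) 2 (volume.restrict (Ioi 0))) := by
  set c : ℝ := (α + N*κ)⁻¹ with hc
  set A : ℝ := ∑ ℓ, starA κ (f ℓ) with hA
  have hWeq : ∀ j, ∀ x : ℝ, 0 ≤ x → w j x = starW κ c A (f j) x := by
    intro j x hx
    rw [hw j x, star_w_eq N κ α j f hfc hfs hx]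
  refine ⟨fun j x => starW' κ c A (f j) x, ?_, ?_, ?_, ?_, ?_, ?_⟩
  · intro j x hx
    exact ((starW_hasDerivAt hκ.ne' c A (hfc j) x).hasDerivWithinAt).congr
      (fun y hy => hWeq j y hy) (hWeq j x hx)
  · intro j
    exact (starW'_continuous c A (hfc j)).continuousOn
  · intro j x hx
    have := starW'_hasDerivAt hκ.ne' c A (hfc j) x
    rwa [← hWeq j x (le_of_lt hx)] at this
  · have h0 : ∀ j : Fin N, w j 0 = c * A := by
      intro j
      rw [hWeq j 0 le_rfl, starW]
      simp [starS, starE]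
    intro j
    rw [h0 j, h0 ⟨0, by omega⟩]
  · have h0 : w ⟨0, by omega⟩ 0 = c * A := by
      rw [hWeq ⟨0, by omega⟩ 0 le_rfl, starW]
      simp [starS, starE]
    have h1 : ∀ j : Fin N, starW' κ c A (f j) 0 = starA κ (f j) - κ * (c * A) := by
      intro j
      rw [starW']
      simp [starS, starE]
    rw [h0, Finset.sum_congr rfl fun j _ => h1 j, Finset.sum_sub_distrib,
      Finset.sum_const, Finset.card_univ, Fintype.card_fin, ← hA]
    rw [hc]
    field_simp
    have hα' : κ * N + α ≠ 0 := by rw [add_comm, mul_comm]; exact hα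
    linear_combination (-A) * mul_inv_cancel₀ hα'
  · intro j
    have hmem := starW_memLp hκ c A (hfc j) (hfs j)
    refine MemLp.ae_eq ?_ hmem
    rw [Filter.EventuallyEq, ae_restrict_iff' measurableSet_Ioi]
    exact ae_of_all _ fun x hx => (hWeq j x (le_of_lt hx)).symm
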